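/- Let D ⊆ ℂ be a domain and A, B ⊆ D. Then for every ordinal α, (A ∪ B)_D^(α) = A_D^(α) ∪ B_D^(α). -/

import Mathlib

open Filter Set Metric

/-- Iterated (transfinite) derived set of `E` with respect to `A`:
`E_A^(0) = E`, `E_A^(α+1) = (E_A^(α))' ∩ A`, and at limit stages the
intersection over `1 ≤ β < α`. -/
noncomputable def derivIter (A : Set ℂ) (E : Set ℂ) (o : Ordinal) : Set ℂ :=
  Ordinal.limitRecOn o E
    (fun _ ih => {z | z ∈ A ∧ AccPt z (Filter.principal ih)})
    (fun o _ ih => ⋂ (β : Ordinal) (h : β < o) (_ : 1 ≤ β), ih β h)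

lemma derivIter_zero (A E : Set ℂ) : derivIter A E 0 = E :=
  Ordinal.limitRecOn_zero ..

lemma derivIter_succ (A E : Set ℂ) (o : Ordinal) :
    derivIter A E (Order.succ o) = A ∩ derivedSet (derivIter A E o) := by
  rw [derivIter, Ordinal.limitRecOn_succ]
  rfl

lemma derivIter_limit (A E : Set ℂ) {o : Ordinal} (ho : Order.IsSuccLimit o) :
    derivIter A E o = ⋂ (β : Ordinal) (_ : β < o) (_ : 1 ≤ β), derivIter A E β := by
  rw [derivIter, Ordinal.limitRecOn_limit _ _ _ _ ho]
  rfl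

lemma derivedSet_derivedSet (S : Set ℂ) : derivedSet (derivedSet S) ⊆ derivedSet S :=
  (isClosed_iff_derivedSet_subset _).mp (isClosed_derivedSet S)

/-- Successor step: from stage 1 on, the iterated derived sets decrease. -/
lemma derivIter_succ_subset (A E : Set ℂ) :
    ∀ δ : Ordinal, 1 ≤ δ → derivIter A E (Order.succ δ) ⊆ derivIter A E δ := by
  intro δ
  induction δ using Ordinal.induction with
  | h δ IH =>
    intro hδ
    rcases Ordinal.zero_or_succ_or_isSuccLimit δ with h0 | ⟨ε, rfl⟩ | hlim
    · exact absurd (h0 ▸ hδ) (by simp)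
    · rw [derivIter_succ, derivIter_succ]
      refine inter_subset_inter_right A ?_
      refine subset_trans ?_ (derivedSet_derivedSet _)
      exact derivedSet_mono _ _ (inter_subset_right)
    · rw [derivIter_succ]
      intro z hz
      rw [derivIter_limit A E hlim]
      simp only [mem_iInter]
      intro β hβo hβ1
      have hsucc : Order.succ β < δ := hlim.succ_lt hβo
      have h1 : derivIter A E δ ⊆ derivIter A E (Order.succ β) := by
        rw [derivIter_limit A E hlim]
        intro w hw
        simp only [mem_iInter] at hw
        exact hw _ hsucc (le_trans hβ1 (Order.le_succ β))
      have h2 : derivedSet (derivIter A E δ) ⊆ derivedSet (derivIter A E β) := by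
        refine subset_trans (derivedSet_mono _ _ h1) ?_
        rw [derivIter_succ]
        exact subset_trans (derivedSet_mono _ _ inter_subset_right)
          (derivedSet_derivedSet _)
      have : z ∈ derivIter A E (Order.succ β) := by
        rw [derivIter_succ]
        exact ⟨hz.1, h2 hz.2⟩
      exact IH β hβo hβ1 this

/-- Antitonicity from stage 1 on. -/
lemma derivIter_antitone (A E : Set ℂ) :
    ∀ γ β : Ordinal, 1 ≤ β → β ≤ γ → derivIter A E γ ⊆ derivIter A E β := by
  intro γ
  induction γ using Ordinal.induction with
  | h γ IH =>
    intro β hβ1 hβγ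
    rcases eq_or_lt_of_le hβγ with rfl | hlt
    · exact subset_rfl
    rcases Ordinal.zero_or_succ_or_isSuccLimit γ with h0 | ⟨δ, rfl⟩ | hlim
    · exact absurd (h0 ▸ hlt) (by simp)
    · have hβδ : β ≤ δ := Order.lt_succ_iff.mp hlt
      have h1δ : (1 : Ordinal) ≤ δ := le_trans hβ1 hβδ
      exact subset_trans (derivIter_succ_subset A E δ h1δ)
        (IH δ (Order.lt_succ δ) β hβ1 hβδ)
    · rw [derivIter_limit A E hlim]
      intro z hz
      simp only [mem_iInter] at hz
      exact hz β hlt hβ1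

theorem stmt_10 (D : Set ℂ) (hD : IsOpen D) (hDc : IsConnected D)
    (A B : Set ℂ) (hA : A ⊆ D) (hB : B ⊆ D) :
    ∀ α : Ordinal, derivIter D (A ∪ B) α = derivIter D A α ∪ derivIter D B α := by
  intro α
  induction α using Ordinal.induction with
  | h α IH =>
    rcases Ordinal.zero_or_succ_or_isSuccLimit α with rfl | ⟨δ, rfl⟩ | hlim
    · simp [derivIter_zero]
    · rw [derivIter_succ, derivIter_succ, derivIter_succ, IH δ (Order.lt_succ δ),
        derivedSet_union, inter_union_distrib_left]
    · rw [derivIter_limit _ _ hlim, derivIter_limit _ _ hlim, derivIter_limit _ _ hlim]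
      ext z
      simp only [mem_iInter, mem_union]
      constructor
      · intro h
        by_contra hc
        push_neg at hc
        obtain ⟨h1, h2⟩ := hc
        obtain ⟨β₁, hβ₁o, hβ₁1, hz1⟩ := h1
        obtain ⟨β₂, hβ₂o, hβ₂1, hz2⟩ := h2
        set β := max β₁ β₂ with hβdef
        have hβo : β < α := max_lt hβ₁o hβ₂o
        have hβ1 : (1 : Ordinal) ≤ β := le_trans hβ₁1 (le_max_left _ _)
        have hm := h β hβo hβ1
        rw [IH β hβo] at hm
        rcases hm with hzA | hzB
        · exact hz1 (derivIter_antitone D A β β₁ hβ₁1 (le_max_left _ _) hzA)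
        · exact hz2 (derivIter_antitone D B β β₂ hβ₂1 (le_max_right _ _) hzB)
      · rintro (h | h) β hβo hβ1 <;> rw [IH β hβo]
        · exact Or.inl (h β hβo hβ1)
        · exact Or.inr (h β hβo hβ1)
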